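/- For every integer i ≥ 0 one has b_3^i − b_4^{i+1} > 0, where b_3^i = ((m*)²/D)·(k!/P(2k+1))·(P(k+i+1)/i!)·I(2i, 4(k+1)l+2) and b_4^{i+1} = (l·(m*)²/D)·((k+1)!/P(2k+1))·(P(k+i+1)/(i+1)!)·I(2i+2, 2(2k+1)l+2). -/

import Mathlib

/-- The critical value m* = ∏_{j=0}^{k} (2j+1)/(2jl+1). -/
noncomputable def mStar (l k : ℕ) : ℝ :=
  ∏ j ∈ Finset.range (k + 1), (2 * (j : ℝ) + 1) / (2 * (j : ℝ) * (l : ℝ) + 1)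

/-- D = 2(2k+1)l + 2. -/
noncomputable def Dd (l k : ℕ) : ℝ := 2 * (2 * (k : ℝ) + 1) * (l : ℝ) + 2

/-- P(i) = ∏_{j=0}^{i-1} (jl + 1), with P(0) = 1. -/
noncomputable def Pp (l i : ℕ) : ℝ := ∏ j ∈ Finset.range i, ((j : ℝ) * (l : ℝ) + 1)

/-- I(a,b) = (2/l^{(a+1)/2})·Γ((a+1)/2)·Γ((b+1)/(2l))/Γ((a+1)/2 + (b+1)/(2l)),
the value of ∫_0^Ω Sn^a Cs^b dθ for even a, b. -/
noncomputable def Ii (l a b : ℕ) : ℝ :=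
  2 / (l : ℝ) ^ (((a : ℝ) + 1) / 2) * Real.Gamma (((a : ℝ) + 1) / 2) *
    Real.Gamma (((b : ℝ) + 1) / (2 * (l : ℝ))) /
    Real.Gamma (((a : ℝ) + 1) / 2 + ((b : ℝ) + 1) / (2 * (l : ℝ)))

lemma key_ineq (L x y c : ℝ) (hL : 0 < L) (hx : 0 < x) (hy : 0 < y)
    (h : c * x < L * y) :
    0 < 2 / L ^ x * Real.Gamma x * Real.Gamma (y + 1) / Real.Gamma (x + (y + 1)) -
        c * (2 / L ^ (x + 1) * Real.Gamma (x + 1) * Real.Gamma y /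
          Real.Gamma (x + 1 + y)) := by
  have hG : Real.Gamma (y + 1) = y * Real.Gamma y := Real.Gamma_add_one (ne_of_gt hy)
  have hG2 : Real.Gamma (x + 1) = x * Real.Gamma x := Real.Gamma_add_one (ne_of_gt hx)
  have hsum : x + (y + 1) = x + 1 + y := by ring
  have hpow : L ^ (x + 1) = L ^ x * L := by rw [Real.rpow_add hL, Real.rpow_one]
  have hGx : 0 < Real.Gamma x := Real.Gamma_pos_of_pos hx
  have hGy : 0 < Real.Gamma y := Real.Gamma_pos_of_pos hy
  have hGs : 0 < Real.Gamma (x + 1 + y) := Real.Gamma_pos_of_pos (by linarith)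
  have hp : 0 < L ^ x := Real.rpow_pos_of_pos hL x
  rw [hG, hG2, hsum, hpow]
  have heq : 2 / L ^ x * Real.Gamma x * (y * Real.Gamma y) / Real.Gamma (x + 1 + y) -
      c * (2 / (L ^ x * L) * (x * Real.Gamma x) * Real.Gamma y / Real.Gamma (x + 1 + y)) =
      (2 / L ^ x * Real.Gamma x * Real.Gamma y / Real.Gamma (x + 1 + y)) *
        ((L * y - c * x) / L) := by
    field_simp
  rw [heq]
  exact mul_pos (div_pos (mul_pos (mul_pos (div_pos two_pos hp) hGx) hGy) hGs)
    (div_pos (by linarith) hL)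

/-- Proposition 3.2 (i): b₃ⁱ − b₄^{i+1} > 0. -/
theorem b3_sub_b4_pos (l k : ℕ) (hl : 2 ≤ l) (hk : 1 ≤ k) (i : ℕ) :
    0 < mStar l k ^ 2 / Dd l k * ((Nat.factorial k : ℝ) / Pp l (2 * k + 1)) *
          (Pp l (k + i + 1) / (Nat.factorial i : ℝ)) * Ii l (2 * i) (4 * (k + 1) * l + 2) -
        (l : ℝ) * mStar l k ^ 2 / Dd l k * ((Nat.factorial (k + 1) : ℝ) / Pp l (2 * k + 1)) *
          (Pp l (k + i + 1) / (Nat.factorial (i + 1) : ℝ)) *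
          Ii l (2 * i + 2) (2 * (2 * k + 1) * l + 2) := by
  have hl2 : (2 : ℝ) ≤ (l : ℝ) := by exact_mod_cast hl
  have hk1 : (1 : ℝ) ≤ (k : ℝ) := by exact_mod_cast hk
  have hi0 : (0 : ℝ) ≤ (i : ℝ) := Nat.cast_nonneg i
  have hl0 : (0 : ℝ) < (l : ℝ) := by linarith
  have hlne : (l : ℝ) ≠ 0 := ne_of_gt hl0
  set x : ℝ := (i : ℝ) + 1 / 2 with hxdef
  set y : ℝ := (2 * (2 * (k : ℝ) + 1) * (l : ℝ) + 3) / (2 * (l : ℝ)) with hydef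
  set c : ℝ := (l : ℝ) * ((k : ℝ) + 1) / ((i : ℝ) + 1) with hcdef
  have hx : 0 < x := by rw [hxdef]; positivity
  have hy : 0 < y := by rw [hydef]; positivity
  have e3 : Ii l (2 * i) (4 * (k + 1) * l + 2) =
      2 / (l : ℝ) ^ x * Real.Gamma x * Real.Gamma (y + 1) / Real.Gamma (x + (y + 1)) := by
    unfold Ii
    rw [show (((2 * i : ℕ) : ℝ) + 1) / 2 = x by rw [hxdef]; push_cast; ring,
      show (((4 * (k + 1) * l + 2 : ℕ) : ℝ) + 1) / (2 * (l : ℝ)) = y + 1 by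
        rw [hydef]; push_cast; field_simp; ring]
  have e4 : Ii l (2 * i + 2) (2 * (2 * k + 1) * l + 2) =
      2 / (l : ℝ) ^ (x + 1) * Real.Gamma (x + 1) * Real.Gamma y /
        Real.Gamma (x + 1 + y) := by
    unfold Ii
    rw [show (((2 * i + 2 : ℕ) : ℝ) + 1) / 2 = x + 1 by rw [hxdef]; push_cast; ring,
      show (((2 * (2 * k + 1) * l + 2 : ℕ) : ℝ) + 1) / (2 * (l : ℝ)) = y by
        rw [hydef]; push_cast; ring]
  have hcx : c * x < (l : ℝ) * y := by
    have hly : (l : ℝ) * y = (2 * (2 * (k : ℝ) + 1) * (l : ℝ) + 3) / 2 := by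
      rw [hydef]; field_simp
    rw [hly, hcdef, hxdef, div_mul_eq_mul_div, div_lt_div_iff₀ (by positivity) two_pos]
    have hk0 : (0:ℝ) ≤ (k:ℝ) := by linarith
    nlinarith [mul_nonneg (mul_nonneg hl0.le hk0) hi0, mul_nonneg hl0.le hi0,
      mul_nonneg hl0.le hk0]
  have hkey := key_ineq (l : ℝ) x y c hl0 hx hy hcx
  have hm : 0 < mStar l k := by
    apply Finset.prod_pos
    intro j _
    apply div_pos <;> positivity
  have hD : 0 < Dd l k := by unfold Dd; positivity
  have hP1 : 0 < Pp l (2 * k + 1) := Finset.prod_pos fun j _ => by positivity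
  have hP2 : 0 < Pp l (k + i + 1) := Finset.prod_pos fun j _ => by positivity
  have hfk : 0 < (Nat.factorial k : ℝ) := by exact_mod_cast Nat.factorial_pos k
  have hfi : 0 < (Nat.factorial i : ℝ) := by exact_mod_cast Nat.factorial_pos i
  have hC1 : 0 < mStar l k ^ 2 / Dd l k * ((Nat.factorial k : ℝ) / Pp l (2 * k + 1)) *
      (Pp l (k + i + 1) / (Nat.factorial i : ℝ)) :=
    mul_pos (mul_pos (div_pos (pow_pos hm 2) hD) (div_pos hfk hP1)) (div_pos hP2 hfi)
  have hfk1 : ((Nat.factorial (k + 1) : ℕ) : ℝ) = ((k : ℝ) + 1) * (Nat.factorial k : ℝ) := by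
    rw [Nat.factorial_succ]; push_cast; ring
  have hfi1 : ((Nat.factorial (i + 1) : ℕ) : ℝ) = ((i : ℝ) + 1) * (Nat.factorial i : ℝ) := by
    rw [Nat.factorial_succ]; push_cast; ring
  rw [e3, e4, hfk1, hfi1]
  have hmain := mul_pos hC1 hkey
  have hi1 : ((i : ℝ) + 1) ≠ 0 := by positivity
  have heq : mStar l k ^ 2 / Dd l k * ((Nat.factorial k : ℝ) / Pp l (2 * k + 1)) *
        (Pp l (k + i + 1) / (Nat.factorial i : ℝ)) *
        (2 / (l : ℝ) ^ x * Real.Gamma x * Real.Gamma (y + 1) / Real.Gamma (x + (y + 1))) -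
      (l : ℝ) * mStar l k ^ 2 / Dd l k *
        (((k : ℝ) + 1) * (Nat.factorial k : ℝ) / Pp l (2 * k + 1)) *
        (Pp l (k + i + 1) / (((i : ℝ) + 1) * (Nat.factorial i : ℝ))) *
        (2 / (l : ℝ) ^ (x + 1) * Real.Gamma (x + 1) * Real.Gamma y /
          Real.Gamma (x + 1 + y)) =
      mStar l k ^ 2 / Dd l k * ((Nat.factorial k : ℝ) / Pp l (2 * k + 1)) *
        (Pp l (k + i + 1) / (Nat.factorial i : ℝ)) *
        (2 / (l : ℝ) ^ x * Real.Gamma x * Real.Gamma (y + 1) / Real.Gamma (x + (y + 1)) -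
          c * (2 / (l : ℝ) ^ (x + 1) * Real.Gamma (x + 1) * Real.Gamma y /
            Real.Gamma (x + 1 + y))) := by
    rw [hcdef, mul_comm ((i : ℝ) + 1) ((Nat.factorial i : ℝ)), ← div_div]; ring
  rw [heq]
  exact hmain
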